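/- Let z ∈ ℂ with 0 < Re z < 1 and let θ ∈ {3π/4, -π/4}. Then there exist real R > 0 and C > 0 such that for every r ≥ R the function t ↦ f_l(t·exp(iθ)) is integrable on [r, ∞) and ‖∫_r^∞ f_l(t·exp(iθ)) dt‖ ≤ C·r^(-Re z). -/

import Mathlib

open MeasureTheory

/-- The left integrand `f_l(w) = w^(-z)·exp(-πi w²)/(exp(πi w) - exp(-πi w))`. -/
noncomputable def fl (z w : ℂ) : ℂ :=
  w ^ (-z) * Complex.exp (-(Real.pi * Complex.I) * w ^ 2) /
    (Complex.exp (Real.pi * Complex.I * w) - Complex.exp (-(Real.pi * Complex.I) * w))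

lemma sqrt_two_ge : (4:ℝ)/3 ≤ Real.sqrt 2 := by
  nlinarith [Real.sq_sqrt (by norm_num : (0:ℝ) ≤ 2), Real.sqrt_nonneg 2]

lemma fl_denom_one_le (θ : ℝ) (hs : Real.sqrt 2 / 2 ≤ |Real.sin θ|) (t : ℝ) (ht : 1 ≤ t) :
    1 ≤ ‖Complex.exp (Real.pi * Complex.I * ((t:ℂ) * Complex.exp (θ * Complex.I))) -
      Complex.exp (-(Real.pi * Complex.I) * ((t:ℂ) * Complex.exp (θ * Complex.I)))‖ := by
  set w : ℂ := (t:ℂ) * Complex.exp (θ * Complex.I) with hw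
  have him : w.im = t * Real.sin θ := by
    simp [hw, Complex.mul_im, Complex.exp_ofReal_mul_I_im]
  set s : ℝ := Real.pi * (t * Real.sin θ) with hsdef
  have ha : ‖Complex.exp (Real.pi * Complex.I * w)‖ = Real.exp (-s) := by
    rw [Complex.norm_exp]
    congr 1
    simp only [Complex.mul_re, Complex.mul_im, Complex.neg_re, Complex.neg_im,
      Complex.ofReal_re, Complex.ofReal_im, Complex.I_re, Complex.I_im, him, hsdef]
    ring
  have hb : ‖Complex.exp (-(Real.pi * Complex.I) * w)‖ = Real.exp s := by
    rw [Complex.norm_exp]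
    congr 1
    simp only [Complex.mul_re, Complex.mul_im, Complex.neg_re, Complex.neg_im,
      Complex.ofReal_re, Complex.ofReal_im, Complex.I_re, Complex.I_im, him, hsdef]
    ring
  have hs2 : 2 ≤ |s| := by
    have : |s| = Real.pi * (t * |Real.sin θ|) := by
      rw [hsdef, abs_mul, abs_mul, abs_of_pos Real.pi_pos, abs_of_pos (by linarith : (0:ℝ) < t)]
    rw [this]
    have h23 : (2:ℝ)/3 ≤ |Real.sin θ| := by linarith [sqrt_two_ge]
    calc (2:ℝ) = 3 * (1 * (2/3)) := by norm_num
      _ ≤ Real.pi * (t * |Real.sin θ|) := by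
          apply mul_le_mul Real.pi_gt_three.le
            (mul_le_mul ht h23 (by norm_num) (by linarith)) (by norm_num) Real.pi_pos.le
  have hkey : Real.exp |s| - Real.exp (-|s|) ≤ |Real.exp (-s) - Real.exp s| := by
    rcases abs_cases s with ⟨h1, h2⟩ | ⟨h1, h2⟩ <;> rw [h1]
    · rw [abs_sub_comm, abs_of_nonneg (by simpa using Real.exp_le_exp.2 (by linarith : -s ≤ s))]
    · rw [abs_of_nonneg (by simpa using Real.exp_le_exp.2 (by linarith : s ≤ -s)), neg_neg]
  have h1 : (1:ℝ) ≤ Real.exp |s| - Real.exp (-|s|) := by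
    have := Real.add_one_le_exp |s|
    have h2 : Real.exp (-|s|) ≤ 1 := Real.exp_le_one_iff.2 (by linarith)
    linarith
  calc (1:ℝ) ≤ Real.exp |s| - Real.exp (-|s|) := h1
    _ ≤ |Real.exp (-s) - Real.exp s| := hkey
    _ = |‖Complex.exp (Real.pi * Complex.I * w)‖ - ‖Complex.exp (-(Real.pi * Complex.I) * w)‖| := by
        rw [ha, hb]
    _ ≤ _ := abs_norm_sub_norm_le _ _

lemma fl_norm_le (z : ℂ) (θ : ℝ) (hc2 : Complex.exp (θ * Complex.I) ^ 2 = -Complex.I)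
    (hs : Real.sqrt 2 / 2 ≤ |Real.sin θ|) (t : ℝ) (ht : 1 ≤ t) :
    ‖fl z ((t:ℂ) * Complex.exp (θ * Complex.I))‖ ≤
      Real.exp (Real.pi * |z.im|) * (t ^ (-z.re) * Real.exp (-t)) := by
  set w : ℂ := (t:ℂ) * Complex.exp (θ * Complex.I) with hw
  have ht0 : (0:ℝ) < t := by linarith
  have habs : ‖w‖ = t := by
    simp [hw, Complex.norm_exp_ofReal_mul_I, abs_of_pos ht0]
  have hw0 : w ≠ 0 := by
    intro h; rw [h, norm_zero] at habs; linarith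
  have h1 : ‖w ^ (-z)‖ ≤ t ^ (-z.re) * Real.exp (Real.pi * |z.im|) := by
    rw [Complex.norm_cpow_of_ne_zero hw0, habs]
    have hre : (-z).re = -z.re := by simp
    have him : (-z).im = -z.im := by simp
    rw [hre, him, div_eq_mul_inv, ← Real.exp_neg]
    apply mul_le_mul_of_nonneg_left _ (Real.rpow_nonneg ht0.le _)
    apply Real.exp_le_exp.2
    calc -(w.arg * -z.im) = w.arg * z.im := by ring
      _ ≤ |w.arg * z.im| := le_abs_self _
      _ = |w.arg| * |z.im| := abs_mul _ _
      _ ≤ Real.pi * |z.im| := by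
          apply mul_le_mul_of_nonneg_right (Complex.abs_arg_le_pi w) (abs_nonneg _)
  have hw2 : -(↑Real.pi * Complex.I) * w ^ 2 = ((-(Real.pi * t ^ 2) : ℝ) : ℂ) := by
    have hsq : w ^ 2 = (t:ℂ) ^ 2 * Complex.exp (θ * Complex.I) ^ 2 := by rw [hw]; ring
    rw [hsq, hc2]
    push_cast
    have : Complex.I * Complex.I = -1 := Complex.I_mul_I
    linear_combination (Real.pi * t^2 : ℂ) * this
  have h2 : ‖Complex.exp (-(↑Real.pi * Complex.I) * w ^ 2)‖ = Real.exp (-(Real.pi * t ^ 2)) := by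
    rw [hw2, Complex.norm_exp, Complex.ofReal_re]
  have h3 := fl_denom_one_le θ hs t ht
  rw [← hw] at h3
  have hnum : ‖w ^ (-z) * Complex.exp (-(↑Real.pi * Complex.I) * w ^ 2)‖ ≤
      Real.exp (Real.pi * |z.im|) * (t ^ (-z.re) * Real.exp (-t)) := by
    rw [norm_mul, h2]
    have hexp : Real.exp (-(Real.pi * t ^ 2)) ≤ Real.exp (-t) := by
      apply Real.exp_le_exp.2
      nlinarith [Real.pi_gt_three]
    calc ‖w ^ (-z)‖ * Real.exp (-(Real.pi * t ^ 2))
        ≤ (t ^ (-z.re) * Real.exp (Real.pi * |z.im|)) * Real.exp (-t) := by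
          apply mul_le_mul h1 hexp (Real.exp_pos _).le
          positivity
      _ = Real.exp (Real.pi * |z.im|) * (t ^ (-z.re) * Real.exp (-t)) := by ring
  calc ‖fl z w‖ = ‖w ^ (-z) * Complex.exp (-(↑Real.pi * Complex.I) * w ^ 2)‖ /
        ‖Complex.exp (↑Real.pi * Complex.I * w) - Complex.exp (-(↑Real.pi * Complex.I) * w)‖ := by
        rw [fl, norm_div]
    _ ≤ ‖w ^ (-z) * Complex.exp (-(↑Real.pi * Complex.I) * w ^ 2)‖ := by
        apply div_le_self (norm_nonneg _) h3
    _ ≤ _ := hnum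

/-- Finiteness of the far parts of the left contour (paper's Lemma 2.2): along the
rays at angles `3π/4` and `-π/4`, the tail integrals of `f_l` exist and are bounded
by `C·r^(-Re z)`. -/
theorem fl_tail_integral_bound (z : ℂ) (h0 : 0 < z.re) (h1 : z.re < 1)
    (θ : ℝ) (hθ : θ = 3 * Real.pi / 4 ∨ θ = -(Real.pi / 4)) :
    ∃ R > (0 : ℝ), ∃ C > (0 : ℝ), ∀ r : ℝ, R ≤ r →
      IntegrableOn (fun t : ℝ => fl z (t * Complex.exp (θ * Complex.I))) (Set.Ici r) ∧
      ‖∫ t in Set.Ici r, fl z (t * Complex.exp (θ * Complex.I))‖ ≤ C * r ^ (-z.re) := by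
  have hsin : Real.sqrt 2 / 2 ≤ |Real.sin θ| := by
    rcases hθ with h | h <;> rw [h]
    · rw [show (3 * Real.pi / 4 : ℝ) = Real.pi - Real.pi / 4 by ring, Real.sin_pi_sub,
        Real.sin_pi_div_four]
      rw [abs_of_nonneg (by positivity)]
    · rw [Real.sin_neg, Real.sin_pi_div_four, abs_neg, abs_of_nonneg (by positivity)]
  have hc2 : Complex.exp (θ * Complex.I) ^ 2 = -Complex.I := by
    rw [← Complex.exp_nat_mul]
    rcases hθ with h | h <;> rw [h]
    · have : (2:ℕ) * ((3 * Real.pi / 4 : ℝ) * Complex.I) = (3 * Real.pi / 2 : ℝ) * Complex.I := by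
        push_cast; ring
      rw [this, Complex.exp_mul_I]
      have hc : Real.cos (3 * Real.pi / 2) = 0 := by
        rw [show (3 * Real.pi / 2 : ℝ) = Real.pi + Real.pi / 2 by ring, Real.cos_add]
        simp
      have hsn : Real.sin (3 * Real.pi / 2) = -1 := by
        rw [show (3 * Real.pi / 2 : ℝ) = Real.pi + Real.pi / 2 by ring, Real.sin_add]
        simp
      rw [← Complex.ofReal_cos, ← Complex.ofReal_sin, hc, hsn]
      simp
    · have : (2:ℕ) * ((-(Real.pi / 4) : ℝ) * Complex.I) = (-(Real.pi / 2) : ℝ) * Complex.I := by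
        push_cast; ring
      rw [this, Complex.exp_mul_I, ← Complex.ofReal_cos, ← Complex.ofReal_sin,
        Real.cos_neg, Real.sin_neg, Real.cos_pi_div_two, Real.sin_pi_div_two]
      simp
  refine ⟨1, one_pos, Real.exp (Real.pi * |z.im|), Real.exp_pos _, fun r hr => ?_⟩
  have hr0 : (0:ℝ) < r := by linarith
  -- measurability
  have hmeas : AEStronglyMeasurable (fun t : ℝ => fl z (t * Complex.exp (θ * Complex.I)))
      (volume.restrict (Set.Ici r)) := by
    apply ContinuousOn.aestronglyMeasurable _ measurableSet_Ici
    simp only [fl]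
    have hwcont : Continuous (fun t : ℝ => (t:ℂ) * Complex.exp (θ * Complex.I)) := by
      continuity
    apply ContinuousOn.div
    · apply ContinuousOn.mul
      · intro t htr
        have htr1 : (1:ℝ) ≤ t := le_trans hr htr
        apply ContinuousAt.continuousWithinAt
        have hslit : (t:ℂ) * Complex.exp (θ * Complex.I) ∈ Complex.slitPlane := by
          rw [Complex.mem_slitPlane_iff]
          right
          have himt : ((t:ℂ) * Complex.exp (θ * Complex.I)).im = t * Real.sin θ := by
            simp [Complex.mul_im, Complex.exp_ofReal_mul_I_im]
          rw [himt]
          have h2pos : (0:ℝ) < Real.sqrt 2 / 2 := by positivity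
          have habs0 : 0 < |Real.sin θ| := lt_of_lt_of_le h2pos hsin
          have hsin0 : Real.sin θ ≠ 0 := by
            intro h; rw [h, abs_zero] at habs0; exact lt_irrefl _ habs0
          exact mul_ne_zero (by linarith) hsin0
        exact ContinuousAt.comp (x := t)
          (f := fun x : ℝ => (x:ℂ) * Complex.exp (θ * Complex.I))
          (continuousAt_cpow_const hslit) hwcont.continuousAt
      · exact (Complex.continuous_exp.comp (by continuity)).continuousOn
    · exact ((Complex.continuous_exp.comp (by continuity)).sub
        (Complex.continuous_exp.comp (by continuity))).continuousOn
    · intro t htr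
      have := fl_denom_one_le θ hsin t (le_trans hr htr)
      intro hcon
      rw [hcon, norm_zero] at this
      linarith
  -- pointwise bound on Ici r
  have hbound : ∀ t ∈ Set.Ici r, ‖fl z ((t:ℂ) * Complex.exp (θ * Complex.I))‖ ≤
      Real.exp (Real.pi * |z.im|) * r ^ (-z.re) * Real.exp (-t) := by
    intro t htr
    have htr' : r ≤ t := htr
    have ht1 : (1:ℝ) ≤ t := le_trans hr htr'
    calc ‖fl z ((t:ℂ) * Complex.exp (θ * Complex.I))‖
        ≤ Real.exp (Real.pi * |z.im|) * (t ^ (-z.re) * Real.exp (-t)) :=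
          fl_norm_le z θ hc2 hsin t ht1
      _ ≤ Real.exp (Real.pi * |z.im|) * (r ^ (-z.re) * Real.exp (-t)) := by
          apply mul_le_mul_of_nonneg_left _ (Real.exp_pos _).le
          apply mul_le_mul_of_nonneg_right _ (Real.exp_pos _).le
          exact Real.rpow_le_rpow_of_nonpos hr0 htr' (by linarith)
      _ = Real.exp (Real.pi * |z.im|) * r ^ (-z.re) * Real.exp (-t) := by ring
  have hgint : IntegrableOn (fun t : ℝ => Real.exp (Real.pi * |z.im|) * r ^ (-z.re) *
      Real.exp (-t)) (Set.Ici r) := by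
    rw [integrableOn_Ici_iff_integrableOn_Ioi]
    apply Integrable.const_mul
    exact (by simpa using exp_neg_integrableOn_Ioi r one_pos : IntegrableOn (fun x : ℝ => Real.exp (-x)) (Set.Ioi r))
  have hint : IntegrableOn (fun t : ℝ => fl z (t * Complex.exp (θ * Complex.I))) (Set.Ici r) := by
    apply Integrable.mono' hgint hmeas
    filter_upwards [ae_restrict_mem measurableSet_Ici] with t htr
    exact hbound t htr
  refine ⟨hint, ?_⟩
  calc ‖∫ t in Set.Ici r, fl z (t * Complex.exp (θ * Complex.I))‖
      ≤ ∫ t in Set.Ici r, Real.exp (Real.pi * |z.im|) * r ^ (-z.re) * Real.exp (-t) := by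
        apply norm_integral_le_of_norm_le hgint
        filter_upwards [ae_restrict_mem measurableSet_Ici] with t htr
        exact hbound t htr
    _ = Real.exp (Real.pi * |z.im|) * r ^ (-z.re) * Real.exp (-r) := by
        rw [integral_Ici_eq_integral_Ioi, integral_const_mul, integral_exp_neg_Ioi]
    _ ≤ Real.exp (Real.pi * |z.im|) * r ^ (-z.re) :=
        mul_le_of_le_one_right (by positivity) (Real.exp_le_one_iff.2 (by linarith))
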